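/- Let X be a set, C a concept class on X, and H a hypothesis class on X. Suppose there is some partially specified subset A of X which is n-consistent with C but which has no total extension in H. Then n < LC^EQ(C, H). -/

import Mathlib

/-!
Definitions for query learning: concepts are total functions `X → Bool`,
partially specified subsets are functions `X → Option Bool`.
-/

/-- A total concept `f` extends the partially specified subset `A`
(i.e. agrees with `A` on its domain). -/
def PExtends {X : Type*} (f : X → Bool) (A : X → Option Bool) : Prop :=
  ∀ x b, A x = some b → f x = b

/-- `A` is `n`-consistent with `C`: every restriction of `A` of size at most `n`
has an extension in `C`. -/
def NConsistent {X : Type*} (C : Set (X → Bool)) (A : X → Option Bool) (n : ℕ) : Prop :=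
  ∀ s : Finset X, s.card ≤ n → ∃ f ∈ C, ∀ x ∈ s, ∀ b, A x = some b → f x = b

/-- `A` is finitely consistent with `C`: every finite restriction of `A`
has an extension in `C`. -/
def FinitelyConsistent {X : Type*} (C : Set (X → Bool)) (A : X → Option Bool) : Prop :=
  ∀ s : Finset X, ∃ f ∈ C, ∀ x ∈ s, ∀ b, A x = some b → f x = b

/-- There is a complete binary tree of height `d`, with internal nodes labelled by
elements of `X` (here indexed by the binary path leading to the node), whose leaves
can each be properly labelled by a concept of `C` agreeing with the root-to-leaf path. -/
def LdimGe {X : Type*} (C : Set (X → Bool)) (d : ℕ) : Prop :=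
  ∃ t : List Bool → X, ∀ σ : List Bool, σ.length = d →
    ∃ f ∈ C, ∀ k, k < d → f (t (σ.take k)) = σ.getD k false

/-- The Littlestone dimension of `C`, valued in `ℕ∞` (`⊤` = no maximum exists). -/
noncomputable def Ldim {X : Type*} (C : Set (X → Bool)) : ℕ∞ :=
  sSup {n : ℕ∞ | ∃ d : ℕ, n = d ∧ LdimGe C d}

/-- `xs` is a valid sequence of counterexamples that an adversarial teacher with
target concept `A` can return against the learner strategy `s` (the learner's next
hypothesis is a function of the list of counterexamples received so far). -/
def ValidEQPlay {X : Type*} (A : X → Bool) (s : List X → (X → Bool)) (xs : List X) : Prop :=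
  ∀ (i : ℕ) (h : i < xs.length),
    s (xs.take i) (xs.get ⟨i, h⟩) ≠ A (xs.get ⟨i, h⟩)

/-- Some learner strategy with hypotheses from `H` identifies every concept of `C`
in at most `n` equivalence queries, against every teacher. -/
def EQLearnIn {X : Type*} (C H : Set (X → Bool)) (n : ℕ) : Prop :=
  ∃ s : List X → (X → Bool), (∀ l, s l ∈ H) ∧
    ∀ A ∈ C, ∀ xs : List X, ValidEQPlay A s xs → xs.length < n

/-- The equivalence-query learning complexity `LC^EQ(C, H)`, valued in `ℕ∞`. -/
noncomputable def LCEQ {X : Type*} (C H : Set (X → Bool)) : ℕ∞ :=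
  sInf {n : ℕ∞ | ∃ m : ℕ, n = m ∧ EQLearnIn C H m}

/-- `xs` is a valid play of a teacher with target `A` against the EQ+MQ learner
strategy `s`: the history records pairs `(x, A x)`; at each step, if the learner
makes the membership query `x` the teacher answers `(x, A x)`, and if the learner
makes an equivalence query `B` the teacher returns a counterexample to `B`. -/
def ValidEMPlay {X : Type*} (A : X → Bool) (s : List (X × Bool) → X ⊕ (X → Bool))
    (xs : List (X × Bool)) : Prop :=
  ∀ (i : ℕ) (h : i < xs.length),
    (xs.get ⟨i, h⟩).2 = A (xs.get ⟨i, h⟩).1 ∧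
    (∀ x, s (xs.take i) = Sum.inl x → (xs.get ⟨i, h⟩).1 = x) ∧
    (∀ B, s (xs.take i) = Sum.inr B → B (xs.get ⟨i, h⟩).1 ≠ A (xs.get ⟨i, h⟩).1)

/-- Some learner strategy making membership queries on elements of `X` and
equivalence queries from `H` identifies every concept of `C` in at most `n`
queries in total, against every teacher. -/
def EMLearnIn {X : Type*} (C H : Set (X → Bool)) (n : ℕ) : Prop :=
  ∃ s : List (X × Bool) → X ⊕ (X → Bool),
    (∀ l B, s l = Sum.inr B → B ∈ H) ∧
    ∀ A ∈ C, ∀ xs : List (X × Bool), ValidEMPlay A s xs → xs.length < n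

/-- The EQ+MQ learning complexity `LC^{EQ+MQ}(C, H)`, valued in `ℕ∞`. -/
noncomputable def LCEM {X : Type*} (C H : Set (X → Bool)) : ℕ∞ :=
  sInf {n : ℕ∞ | ∃ m : ℕ, n = m ∧ EMLearnIn C H m}

/-- Every total function `X → Bool` that is `n`-consistent with `C` belongs to `H`. -/
def CDimLe {X : Type*} (C H : Set (X → Bool)) (n : ℕ) : Prop :=
  ∀ A : X → Bool, NConsistent C (fun x => some (A x)) n → A ∈ H

/-- The consistency dimension `C(C, H)`, valued in `ℕ∞`. -/
noncomputable def CDim {X : Type*} (C H : Set (X → Bool)) : ℕ∞ :=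
  sInf {n : ℕ∞ | ∃ m : ℕ, n = m ∧ CDimLe C H m}

/-- Every partially specified subset that is `n`-consistent with `C` has a total
extension in `H`. -/
def SCDimLe {X : Type*} (C H : Set (X → Bool)) (n : ℕ) : Prop :=
  ∀ A : X → Option Bool, NConsistent C A n → ∃ B ∈ H, PExtends B A

/-- The strong consistency dimension `SC(C, H)`, valued in `ℕ∞`. -/
noncomputable def SCDim {X : Type*} (C H : Set (X → Bool)) : ℕ∞ :=
  sInf {n : ℕ∞ | ∃ m : ℕ, n = m ∧ SCDimLe C H m}

/-- Auxiliary: iterate a picking function to build a list of counterexamples. -/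
def mkL {X : Type*} (pick : List X → X) : ℕ → List X
  | 0 => []
  | (i+1) => mkL pick i ++ [pick (mkL pick i)]

lemma mkL_length {X : Type*} (pick : List X → X) : ∀ i, (mkL pick i).length = i
  | 0 => rfl
  | (i+1) => by simp [mkL, mkL_length pick i]

lemma mkL_take {X : Type*} (pick : List X → X) {i : ℕ} :
    ∀ {m : ℕ}, i ≤ m → (mkL pick m).take i = mkL pick i := by
  intro m
  induction m with
  | zero => intro h; interval_cases i; rfl
  | succ m ih =>
    intro h
    by_cases hle : i ≤ m
    · rw [mkL, List.take_append_of_le_length (by rw [mkL_length]; exact hle), ih hle]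
    · have : i = m + 1 := by omega
      subst this
      exact List.take_of_length_le (le_of_eq (mkL_length pick (m+1)))

lemma mkL_get {X : Type*} (pick : List X → X) {i m : ℕ} (h : i < m)
    (h' : i < (mkL pick m).length) :
    (mkL pick m).get ⟨i, h'⟩ = pick (mkL pick i) := by
  have h1 : (mkL pick m).take (i+1) = mkL pick (i+1) := mkL_take pick h
  have hp : mkL pick (i+1) <+: mkL pick m := h1 ▸ List.take_prefix _ _
  simp only [List.get_eq_getElem]
  rw [← hp.getElem (by rw [mkL_length]; omega)]
  show (mkL pick (i+1))[i]'(by simp [mkL_length]) = _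
  simp only [mkL]
  rw [List.getElem_append_right (by simp [mkL_length])]
  simp [mkL_length]

theorem stmt_4 {X : Type*} (C H : Set (X → Bool)) (A : X → Option Bool) (n : ℕ)
    (hcons : NConsistent C A n) (hext : ¬∃ B ∈ H, PExtends B A) :
    (n : ℕ∞) < LCEQ C H := by
  classical
  have hstep : (n : ℕ∞) < (n + 1 : ℕ) := by exact_mod_cast Nat.lt_succ_self n
  refine lt_of_lt_of_le hstep (le_sInf ?_)
  rintro a ⟨m, rfl, s, hsH, hlearn⟩
  -- every hypothesis fails to extend A
  have hfail : ∀ l : List X, ∃ x, ∃ b, A x = some b ∧ s l x ≠ b := by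
    intro l
    by_contra hcon
    push_neg at hcon
    exact hext ⟨s l, hsH l, fun x b hb => hcon x b hb⟩
  set pick : List X → X := fun l => (hfail l).choose with hpick
  have hpickspec : ∀ l : List X, ∃ b, A (pick l) = some b ∧ s l (pick l) ≠ b :=
    fun l => (hfail l).choose_spec
  set L : List X := mkL pick n with hL
  have hLlen : L.length = n := mkL_length pick n
  obtain ⟨f, hfC, hfext⟩ := hcons L.toFinset (le_trans (List.toFinset_card_le L) hLlen.le)
  have hvalid : ValidEQPlay f s L := by
    intro i hi
    have hin : i < n := by rwa [hLlen] at hi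
    have hget : L.get ⟨i, hi⟩ = pick (mkL pick i) := mkL_get pick hin hi
    have htake : L.take i = mkL pick i := mkL_take pick hin.le
    obtain ⟨b, hab, hsb⟩ := hpickspec (mkL pick i)
    have hmem : L.get ⟨i, hi⟩ ∈ L.toFinset := List.mem_toFinset.mpr (List.get_mem L ⟨i, hi⟩)
    have hfb : f (L.get ⟨i, hi⟩) = b := hfext _ hmem b (by rw [hget]; exact hab)
    rw [hget] at hfb
    rw [htake, hget, hfb]
    exact hsb
  have := hlearn f hfC L hvalid
  rw [hLlen] at this
  exact_mod_cast this
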